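/- For a fixed pair (k, s), the downlink MSE of symbol (k, s) equals its interference-channel MSE, ξ^{DL}_{ks} = ξ^{I}_{ks}, if and only if β̄_{ks}² · w_{ks}^H ( H_k^H ( Σ_{(i,j)≠(k,s)} b_{ij} b_{ij}^H ) H_k + R_k ) w_{ks} = b_{ks}^H ( Σ_{(i,j)≠(k,s)} β̄_{ij}² H_i w_{ij} w_{ij}^H H_i^H + Ψ + μ_{ks} I_N ) b_{ks}. (This is the symbol-wise MSE transfer condition (40).) -/

import Mathlib

open Matrix Finset

lemma vmv_mulVec {n m : Type*} [Fintype m] (u : n → ℂ) (v x : m → ℂ) :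
    vecMulVec u v *ᵥ x = (v ⬝ᵥ x) • u := by
  ext i
  simp [vecMulVec_apply, mulVec, dotProduct, Finset.mul_sum, mul_comm, mul_left_comm]

lemma cross_eq {n m : Type*} [Fintype n] [Fintype m]
    (A : Matrix n m ℂ) (wv : m → ℂ) (bv : n → ℂ) :
    star (A *ᵥ wv) ⬝ᵥ bv = star wv ⬝ᵥ (Aᴴ *ᵥ bv) := by
  rw [star_mulVec, ← dotProduct_mulVec]

/-- **Symbol-wise MSE transfer condition (40).**  For a fixed symbol `(k, s)`, with the
interference-channel variables `v_{ks} = β̄_{ks} w_{ks}`, `t_{ks} = b_{ks} / β̄_{ks}`,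
unit input variances and noise covariances `Δ_{ks} = Ψ + μ_{ks} I_N`, the downlink MSE
of symbol `(k, s)` equals its interference-channel MSE, `ξᴰᴸ_{ks} = ξᴵ_{ks}`, if and
only if
`β̄_{ks}² wᴴ (Hₖᴴ (∑_{(i,j) ≠ (k,s)} b_{ij} b_{ij}ᴴ) Hₖ + Rₖ) w
  = bᴴ (∑_{(i,j) ≠ (k,s)} β̄_{ij}² H_i w_{ij} w_{ij}ᴴ H_iᴴ + Ψ + μ_{ks} I_N) b`. -/
theorem symbolwise_MSE_transfer_condition
    (N K : ℕ) (hN : 1 ≤ N) (hK : 1 ≤ K)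
    (M S : Fin K → ℕ)
    (H : ∀ k : Fin K, Matrix (Fin N) (Fin (M k)) ℂ)
    (R : ∀ k : Fin K, Matrix (Fin (M k)) (Fin (M k)) ℂ)
    (b : ∀ k : Fin K, Fin (S k) → (Fin N → ℂ))
    (w : ∀ k : Fin K, Fin (S k) → (Fin (M k) → ℂ))
    (βb : ∀ k : Fin K, Fin (S k) → ℝ) (hβ : ∀ k s, βb k s ≠ 0)
    (μ : ∀ k : Fin K, Fin (S k) → ℝ) (ψ : Fin N → ℝ)
    (Ψm : Matrix (Fin N) (Fin N) ℂ) (hΨm : Ψm = Matrix.diagonal fun i => (ψ i : ℂ))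
    (k : Fin K) (s : Fin (S k))
    (v : Fin (M k) → ℂ) (hv : v = (βb k s : ℂ) • w k s)
    (t : Fin N → ℂ) (ht : t = (βb k s : ℂ)⁻¹ • b k s)
    -- the sum of `b_{ij} b_{ij}ᴴ` over all symbol pairs `(i, j)`
    (BBall : Matrix (Fin N) (Fin N) ℂ)
    (hBBall : BBall = ∑ p : Σ i : Fin K, Fin (S i),
        vecMulVec (b p.1 p.2) (star (b p.1 p.2)))
    -- the sum of `b_{ij} b_{ij}ᴴ` over all symbol pairs `(i, j) ≠ (k, s)`
    (BBerase : Matrix (Fin N) (Fin N) ℂ)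
    (hBBerase : BBerase = ∑ p ∈ Finset.univ.erase (⟨k, s⟩ : Σ i : Fin K, Fin (S i)),
        vecMulVec (b p.1 p.2) (star (b p.1 p.2)))
    -- `Γ_c = ∑_{(i,j)} β̄_{ij}² H_i w_{ij} w_{ij}ᴴ H_iᴴ`
    (Γ : Matrix (Fin N) (Fin N) ℂ)
    (hΓ : Γ = ∑ p : Σ i : Fin K, Fin (S i), ((βb p.1 p.2 : ℂ)) ^ 2 •
        vecMulVec ((H p.1) *ᵥ w p.1 p.2) (star ((H p.1) *ᵥ w p.1 p.2)))
    -- `∑_{(i,j) ≠ (k,s)} β̄_{ij}² H_i w_{ij} w_{ij}ᴴ H_iᴴ`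
    (Γerase : Matrix (Fin N) (Fin N) ℂ)
    (hΓerase : Γerase = ∑ p ∈ Finset.univ.erase (⟨k, s⟩ : Σ i : Fin K, Fin (S i)),
        ((βb p.1 p.2 : ℂ)) ^ 2 •
          vecMulVec ((H p.1) *ᵥ w p.1 p.2) (star ((H p.1) *ᵥ w p.1 p.2)))
    (ξDL ξI : ℂ)
    (hξDL : ξDL = star (w k s) ⬝ᵥ (((H k)ᴴ * BBall * (H k) + R k) *ᵥ w k s)
        - star (w k s) ⬝ᵥ ((H k)ᴴ *ᵥ b k s)
        - star (b k s) ⬝ᵥ ((H k) *ᵥ w k s) + 1)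
    (hξI : ξI = star t ⬝ᵥ (Γ *ᵥ t)
        + star t ⬝ᵥ ((Ψm + (μ k s : ℂ) • 1) *ᵥ t)
        - star t ⬝ᵥ ((H k) *ᵥ v)
        - star v ⬝ᵥ ((H k)ᴴ *ᵥ t) + 1) :
    ξDL = ξI ↔
      (βb k s : ℂ) ^ 2 *
          (star (w k s) ⬝ᵥ (((H k)ᴴ * BBerase * (H k) + R k) *ᵥ w k s))
        = star (b k s) ⬝ᵥ ((Γerase + Ψm + (μ k s : ℂ) • 1) *ᵥ b k s) := by
  set β : ℂ := (βb k s : ℂ) with hβdef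
  have hβne : β ≠ 0 := by
    simp [hβdef, Complex.ofReal_eq_zero, hβ k s]
  set wv := w k s
  set bv := b k s
  set Hm := H k
  set c1 : ℂ := star wv ⬝ᵥ (Hmᴴ *ᵥ bv) with hc1
  set c2 : ℂ := star bv ⬝ᵥ (Hm *ᵥ wv) with hc2
  set A : ℂ := star wv ⬝ᵥ ((Hmᴴ * BBerase * Hm + R k) *ᵥ wv) with hA
  set G : ℂ := star bv ⬝ᵥ (Γerase *ᵥ bv) with hG
  set D : ℂ := star bv ⬝ᵥ ((Ψm + (μ k s : ℂ) • 1) *ᵥ bv) with hD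
  -- split of the full sums
  have hBB : BBall = BBerase + vecMulVec bv (star bv) := by
    rw [hBBall, hBBerase,
      ← Finset.sum_erase_add _ _ (Finset.mem_univ (⟨k, s⟩ : Σ i : Fin K, Fin (S i)))]
  have hΓsplit : Γ = Γerase + β ^ 2 • vecMulVec (Hm *ᵥ wv) (star (Hm *ᵥ wv)) := by
    rw [hΓ, hΓerase,
      ← Finset.sum_erase_add _ _ (Finset.mem_univ (⟨k, s⟩ : Σ i : Fin K, Fin (S i)))]
  -- star of t and v
  have hstart : star t = β⁻¹ • star bv := by
    rw [ht, star_smul]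
    congr 1
    simp [hβdef]
  have hstarv : star v = β • star wv := by
    rw [hv, star_smul]
    congr 1
    simp [hβdef]
  -- the downlink MSE in closed form
  have hrank1 : star wv ⬝ᵥ ((Hmᴴ * vecMulVec bv (star bv) * Hm) *ᵥ wv) = c2 * c1 := by
    rw [← mulVec_mulVec, ← mulVec_mulVec, vmv_mulVec, mulVec_smul, dotProduct_smul,
      smul_eq_mul, hc1, hc2]
  have hDLform : ξDL = A + c2 * c1 - c1 - c2 + 1 := by
    rw [hξDL, hBB]
    have : Hmᴴ * (BBerase + vecMulVec bv (star bv)) * Hm + R k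
        = (Hmᴴ * BBerase * Hm + R k) + Hmᴴ * vecMulVec bv (star bv) * Hm := by
      rw [Matrix.mul_add, Matrix.add_mul]; abel
    rw [this, add_mulVec, dotProduct_add, hrank1]
  -- the interference MSE in closed form
  have hΓquad : star bv ⬝ᵥ (Γ *ᵥ bv) = G + β ^ 2 * (c1 * c2) := by
    rw [hΓsplit, add_mulVec, dotProduct_add, smul_mulVec, dotProduct_smul,
      vmv_mulVec, dotProduct_smul, cross_eq, smul_eq_mul, smul_eq_mul, hc1, hc2, hG]
  have hq1 : star t ⬝ᵥ (Γ *ᵥ t) = β⁻¹ * β⁻¹ * (G + β ^ 2 * (c1 * c2)) := by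
    rw [hstart, ht, smul_dotProduct, mulVec_smul, dotProduct_smul, hΓquad,
      smul_eq_mul, smul_eq_mul]
    ring
  have hq2 : star t ⬝ᵥ ((Ψm + (μ k s : ℂ) • 1) *ᵥ t) = β⁻¹ * β⁻¹ * D := by
    rw [hstart, ht, smul_dotProduct, mulVec_smul, dotProduct_smul, hD,
      smul_eq_mul, smul_eq_mul]
    ring
  have hq3 : star t ⬝ᵥ (Hm *ᵥ v) = c2 := by
    rw [hstart, hv, mulVec_smul, smul_dotProduct, dotProduct_smul,
      smul_eq_mul, smul_eq_mul, hc2]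
    field_simp
  have hq4 : star v ⬝ᵥ (Hmᴴ *ᵥ t) = c1 := by
    rw [hstarv, ht, mulVec_smul, smul_dotProduct, dotProduct_smul,
      smul_eq_mul, smul_eq_mul, hc1]
    field_simp
  have hIform : ξI = β⁻¹ * β⁻¹ * (G + D) + c1 * c2 - c2 - c1 + 1 := by
    rw [hξI, hq1, hq2, hq3, hq4]
    field_simp
    ring
  -- the right-hand side of the equivalence
  have hC : star bv ⬝ᵥ ((Γerase + Ψm + (μ k s : ℂ) • 1) *ᵥ bv) = G + D := by
    rw [add_assoc, add_mulVec, dotProduct_add, hG, hD]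
  rw [hDLform, hIform, hC]
  constructor
  · intro h
    have hA' : A = β⁻¹ * β⁻¹ * (G + D) := by
      have := h
      ring_nf at this ⊢
      linear_combination this
    rw [hA']
    field_simp
  · intro h
    have hA' : A = β⁻¹ * β⁻¹ * (G + D) := by
      rw [← h]
      field_simp
    rw [hA']
    ring
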